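/- Let u ∈ L^p(Ω) for 0 < p < ∞ and let (f_n) be a sequence bounded in L^p converging a.e. to f. Then lim_{n→∞} | ‖f_n‖_p^p − ‖f_n − f‖_p^p | exists and equals ‖f‖_p^p (Brézis–Lieb lemma, norm-to-the-p form). -/

import Mathlib

open MeasureTheory Filter ENNReal

/-- Subadditivity of `x ↦ x ^ p` on nonneg reals for `p ≤ 1`. -/
lemma BL.rpow_add_le {p a b : ℝ} (hp : 0 ≤ p) (hp1 : p ≤ 1) (ha : 0 ≤ a) (hb : 0 ≤ b) :
    (a + b) ^ p ≤ a ^ p + b ^ p := by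
  have h := NNReal.rpow_add_le_add_rpow a.toNNReal b.toNNReal hp hp1
  have := NNReal.coe_le_coe.2 h
  push_cast at this
  rwa [Real.coe_toNNReal _ ha, Real.coe_toNNReal _ hb] at this

/-- Mean-value-type inequality: for `1 ≤ p` and `0 ≤ y ≤ x`,
`x ^ p - y ^ p ≤ p * x ^ (p - 1) * (x - y)`. -/
lemma BL.rpow_sub_rpow_le {p x y : ℝ} (hp : 1 ≤ p) (hy : 0 ≤ y) (hxy : y ≤ x) :
    x ^ p - y ^ p ≤ p * x ^ (p - 1) * (x - y) := by
  have hx : 0 ≤ x := hy.trans hxy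
  rcases eq_or_lt_of_le hx with h0 | hxpos
  · have hx0 : x = 0 := h0.symm
    have hy0 : y = 0 := le_antisymm (hx0 ▸ hxy) hy
    simp [hx0, hy0, Real.zero_rpow (by positivity : p ≠ 0)]
  · set t := y / x with ht
    have ht0 : 0 ≤ t := div_nonneg hy hx
    have ht1 : t ≤ 1 := (div_le_one hxpos).2 hxy
    have hbern : 1 + p * (t - 1) ≤ (1 + (t - 1)) ^ p :=
      one_add_mul_self_le_rpow_one_add (by linarith) hp
    rw [add_sub_cancel] at hbern
    -- so 1 - t^p ≤ p * (1 - t)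
    have key : 1 - t ^ p ≤ p * (1 - t) := by nlinarith
    have hyx : y = t * x := by rw [ht, div_mul_cancel₀ y hxpos.ne']
    have htp : y ^ p = t ^ p * x ^ p := by
      rw [hyx, Real.mul_rpow ht0 hx]
    have hxp : x ^ p = x ^ (p - 1) * x := by
      rw [← Real.rpow_add_one hxpos.ne' (p - 1), sub_add_cancel]
    have hxpnn : (0:ℝ) ≤ x ^ (p - 1) := Real.rpow_nonneg hx _
    calc x ^ p - y ^ p = (1 - t ^ p) * x ^ p := by rw [htp]; ring
      _ ≤ (p * (1 - t)) * x ^ p := by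
          apply mul_le_mul_of_nonneg_right key (Real.rpow_nonneg hx _)
      _ = p * x ^ (p - 1) * (x - y) := by rw [hxp, hyx]; ring



/-- abs version -/
lemma BL.abs_rpow_sub_abs_rpow_le {p : ℝ} (hp : 1 ≤ p) (a b : ℝ) :
    abs (|a + b| ^ p - |a| ^ p) ≤ p * (|a| + |b|) ^ (p - 1) * |b| := by
  have hp1 : 0 ≤ p - 1 := by linarith
  have key : ∀ u v : ℝ, |v| ≤ |u| →
      |u| ^ p - |v| ^ p ≤ p * (|a| + |b|) ^ (p - 1) * |b| →
      True := fun _ _ _ _ => trivial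
  -- main bound for x := max, y := min
  set x := max |a + b| |a| with hx
  set y := min |a + b| |a| with hy2
  have hy0 : 0 ≤ y := le_min (abs_nonneg _) (abs_nonneg _)
  have hyx : y ≤ x := min_le_max
  have habs : abs (|a + b| ^ p - |a| ^ p) = x ^ p - y ^ p := by
    rcases le_total |a + b| |a| with h | h
    · rw [abs_sub_comm,
        abs_of_nonneg (sub_nonneg.2 (Real.rpow_le_rpow (abs_nonneg _) h (by linarith)))]
      rw [hx, hy2, max_eq_right h, min_eq_left h]
    · rw [abs_of_nonneg (sub_nonneg.2 (Real.rpow_le_rpow (abs_nonneg _) h (by linarith)))]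
      rw [hx, hy2, max_eq_left h, min_eq_right h]
  have hxyb : x - y ≤ |b| := by
    rcases le_total |a + b| |a| with h | h
    · rw [hx, hy2, max_eq_right h, min_eq_left h]
      have := abs_sub_abs_le_abs_sub a (a + b)
      simp only [sub_add_cancel_left, abs_neg] at this
      linarith [abs_sub_abs_le_abs_sub a (a+b), abs_neg b]
    · rw [hx, hy2, max_eq_left h, min_eq_right h]
      have := abs_sub_abs_le_abs_sub (a + b) a
      simpa using this
  have hxle : x ≤ |a| + |b| := by
    apply max_le
    · exact (abs_add_le _ _)
    · linarith [abs_nonneg b]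
  rw [habs]
  calc x ^ p - y ^ p ≤ p * x ^ (p - 1) * (x - y) := BL.rpow_sub_rpow_le hp hy0 hyx
    _ ≤ p * (|a| + |b|) ^ (p - 1) * |b| := by
        apply mul_le_mul
        · exact mul_le_mul_of_nonneg_left
            (Real.rpow_le_rpow (hy0.trans hyx) hxle hp1) (by linarith)
        · exact hxyb
        · linarith [hy0.trans hyx, hy0]
        · positivity

/-- Key inequality for Brezis–Lieb. -/
lemma BL.key {p : ℝ} (hp0 : 0 < p) {ε : ℝ} (hε : 0 < ε) :
    ∃ C : ℝ, 0 ≤ C ∧ ∀ a b : ℝ, abs (|a + b| ^ p - |a| ^ p) ≤ ε * |a| ^ p + C * |b| ^ p := by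
  rcases le_total p 1 with hp1 | hp1
  · refine ⟨1, zero_le_one, fun a b => ?_⟩
    have h1 : |a + b| ^ p ≤ |a| ^ p + |b| ^ p := by
      calc |a + b| ^ p ≤ (|a| + |b|) ^ p :=
            Real.rpow_le_rpow (abs_nonneg _) (abs_add_le _ _) hp0.le
        _ ≤ |a| ^ p + |b| ^ p := BL.rpow_add_le hp0.le hp1 (abs_nonneg _) (abs_nonneg _)
    have h2 : |a| ^ p ≤ |a + b| ^ p + |b| ^ p := by
      calc |a| ^ p ≤ (|a + b| + |b|) ^ p := by
            apply Real.rpow_le_rpow (abs_nonneg _) _ hp0.le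
            calc |a| = |a + b + (-b)| := by ring_nf
              _ ≤ |a + b| + |(-b)| := abs_add_le _ _
              _ = |a + b| + |b| := by rw [abs_neg]
        _ ≤ |a + b| ^ p + |b| ^ p := BL.rpow_add_le hp0.le hp1 (abs_nonneg _) (abs_nonneg _)
    rw [abs_sub_le_iff]
    constructor
    · have : 0 ≤ ε * |a| ^ p := by positivity
      nlinarith [Real.rpow_nonneg (abs_nonneg b) p]
    · have : 0 ≤ ε * |a| ^ p := by positivity
      nlinarith [Real.rpow_nonneg (abs_nonneg b) p]
  · -- p ≥ 1
    set δ : ℝ := min 1 (ε / (p * 2 ^ (p - 1))) with hδdef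
    have h2p : (0:ℝ) < p * 2 ^ (p - 1) := by positivity
    have hδ0 : 0 < δ := lt_min one_pos (by positivity)
    have hδ1 : δ ≤ 1 := min_le_left _ _
    have hδε : p * 2 ^ (p - 1) * δ ≤ ε := by
      have : δ ≤ ε / (p * 2 ^ (p - 1)) := min_le_right _ _
      calc p * 2 ^ (p - 1) * δ ≤ p * 2 ^ (p - 1) * (ε / (p * 2 ^ (p - 1))) :=
            mul_le_mul_of_nonneg_left this h2p.le
        _ = ε := by field_simp
    refine ⟨p * ((1 + δ) / δ) ^ (p - 1), by positivity, fun a b => ?_⟩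
    have hbase := BL.abs_rpow_sub_abs_rpow_le hp1 a b
    have hp1' : (0:ℝ) ≤ p - 1 := by linarith
    rcases le_total |b| (δ * |a|) with hc | hc
    · -- small b case : bound by ε * |a|^p
      have h1 : (|a| + |b|) ^ (p - 1) ≤ (2 * |a|) ^ (p - 1) := by
        apply Real.rpow_le_rpow (by positivity) _ hp1'
        nlinarith [abs_nonneg a]
      have h2 : p * (|a| + |b|) ^ (p - 1) * |b| ≤ p * (2 * |a|) ^ (p - 1) * (δ * |a|) := by
        apply mul_le_mul _ hc (abs_nonneg _) (by positivity)
        exact mul_le_mul_of_nonneg_left h1 hp0.le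
      have h3 : p * (2 * |a|) ^ (p - 1) * (δ * |a|) = p * 2 ^ (p - 1) * δ * |a| ^ p := by
        rw [Real.mul_rpow (by norm_num) (abs_nonneg a)]
        rw [show p = (p - 1) + 1 by ring, Real.rpow_add_one' (abs_nonneg a) (by linarith)]
        ring_nf
      have h4 : p * 2 ^ (p - 1) * δ * |a| ^ p ≤ ε * |a| ^ p :=
        mul_le_mul_of_nonneg_right hδε (Real.rpow_nonneg (abs_nonneg a) p)
      have hC : 0 ≤ p * ((1 + δ) / δ) ^ (p - 1) * |b| ^ p := by positivity
      linarith
    · -- large b case : |a| ≤ |b| / δ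
      have haB : |a| ≤ |b| / δ := by
        rw [le_div_iff₀ hδ0]; linarith [mul_comm δ (|a|)] 
      have h1 : (|a| + |b|) ^ (p - 1) ≤ ((1 + δ) / δ * |b|) ^ (p - 1) := by
        apply Real.rpow_le_rpow (by positivity) _ hp1'
        have : |a| + |b| ≤ |b| / δ + |b| := by linarith
        calc |a| + |b| ≤ |b| / δ + |b| := this
          _ = (1 + δ) / δ * |b| := by field_simp
      have h2 : p * (|a| + |b|) ^ (p - 1) * |b| ≤
          p * ((1 + δ) / δ) ^ (p - 1) * |b| ^ p := by
        have := mul_le_mul_of_nonneg_left h1 hp0.le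
        have h3 := mul_le_mul_of_nonneg_right this (abs_nonneg b)
        calc p * (|a| + |b|) ^ (p - 1) * |b|
            ≤ p * ((1 + δ) / δ * |b|) ^ (p - 1) * |b| := h3
          _ = p * ((1 + δ) / δ) ^ (p - 1) * |b| ^ p := by
              rw [Real.mul_rpow (by positivity) (abs_nonneg b)]
              rw [show p = (p - 1) + 1 by ring, Real.rpow_add_one' (abs_nonneg b) (by linarith)]
              ring_nf
      have hε' : 0 ≤ ε * |a| ^ p := by positivity
      linarith



theorem brezis_lieb {Ω : Type*} [MeasurableSpace Ω] (μ : Measure Ω)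
    (p : ℝ) (hp0 : 0 < p) (f : ℕ → Ω → ℝ) (flim : Ω → ℝ)
    (hmeas : ∀ n, AEMeasurable (f n) μ)
    (hbdd : ∃ M : ℝ≥0∞, M ≠ ⊤ ∧ ∀ n, (∫⁻ x, ENNReal.ofReal (|f n x| ^ p) ∂μ) ≤ M)
    (hae : ∀ᵐ x ∂μ, Tendsto (fun n => f n x) atTop (nhds (flim x))) :
    Tendsto (fun n =>
        |(∫ x, |f n x| ^ p ∂μ) - ∫ x, |f n x - flim x| ^ p ∂μ|)
      atTop (nhds (∫ x, |flim x| ^ p ∂μ)) := by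
  obtain ⟨M, hMtop, hM⟩ := hbdd
  set A : ℕ → Ω → ℝ := fun n x => |f n x| ^ p with hA
  set B : ℕ → Ω → ℝ := fun n x => |f n x - flim x| ^ p with hB
  set Cf : Ω → ℝ := fun x => |flim x| ^ p with hCf
  have hcont : Continuous fun t : ℝ => |t| ^ p := by
    rw [continuous_iff_continuousAt]
    intro t
    exact (Real.continuousAt_rpow_const _ _ (Or.inr hp0.le)).comp continuous_abs.continuousAt
  have hflim_meas : AEMeasurable flim μ := aemeasurable_of_tendsto_metrizable_ae _ hmeas hae
  have hAmeas : ∀ n, AEMeasurable (A n) μ := fun n =>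
    hcont.measurable.comp_aemeasurable (hmeas n)
  have hBmeas : ∀ n, AEMeasurable (B n) μ := fun n =>
    hcont.measurable.comp_aemeasurable ((hmeas n).sub hflim_meas)
  have hCmeas : AEMeasurable Cf μ := hcont.measurable.comp_aemeasurable hflim_meas
  have hAnn : ∀ n x, 0 ≤ A n x := fun n x => Real.rpow_nonneg (abs_nonneg _) p
  have hBnn : ∀ n x, 0 ≤ B n x := fun n x => Real.rpow_nonneg (abs_nonneg _) p
  have hCnn : ∀ x, 0 ≤ Cf x := fun x => Real.rpow_nonneg (abs_nonneg _) p
  -- Fatou : flim ∈ Lᵖ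
  have hMf : ∫⁻ x, ENNReal.ofReal (Cf x) ∂μ ≤ M := by
    have hpt : ∀ᵐ x ∂μ, Tendsto (fun n => ENNReal.ofReal (A n x)) atTop
        (nhds (ENNReal.ofReal (Cf x))) := by
      filter_upwards [hae] with x hx
      exact (ENNReal.continuous_ofReal.tendsto _).comp ((hcont.tendsto _).comp hx)
    calc ∫⁻ x, ENNReal.ofReal (Cf x) ∂μ
        = ∫⁻ x, liminf (fun n => ENNReal.ofReal (A n x)) atTop ∂μ := by
          apply lintegral_congr_ae
          filter_upwards [hpt] with x hx
          exact hx.liminf_eq.symm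
      _ ≤ liminf (fun n => ∫⁻ x, ENNReal.ofReal (A n x) ∂μ) atTop :=
          lintegral_liminf_le' fun n =>
            ENNReal.measurable_ofReal.comp_aemeasurable (hAmeas n)
      _ ≤ liminf (fun _ : ℕ => M) atTop :=
          liminf_le_liminf (Eventually.of_forall hM)
      _ = M := liminf_const M
  -- integrability
  have hAint : ∀ n, Integrable (A n) μ := by
    intro n
    refine ⟨(hAmeas n).aestronglyMeasurable, ?_⟩
    rw [hasFiniteIntegral_iff_ofReal (Eventually.of_forall (hAnn n))]
    exact lt_of_le_of_lt (hM n) hMtop.lt_top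
  have hCint : Integrable Cf μ := by
    refine ⟨hCmeas.aestronglyMeasurable, ?_⟩
    rw [hasFiniteIntegral_iff_ofReal (Eventually.of_forall hCnn)]
    exact lt_of_le_of_lt hMf hMtop.lt_top
  have hBptle : ∀ n x, B n x ≤ 2 ^ p * (A n x + Cf x) := by
    intro n x
    have h2 : (0:ℝ) ≤ 2 ^ p := Real.rpow_nonneg (by norm_num) _
    rcases le_total |f n x| |flim x| with h | h
    · calc B n x ≤ (2 * |flim x|) ^ p := by
            apply Real.rpow_le_rpow (abs_nonneg _) _ hp0.le
            calc |f n x - flim x| ≤ |f n x| + |flim x| := abs_sub _ _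
              _ ≤ 2 * |flim x| := by linarith
        _ = 2 ^ p * Cf x := Real.mul_rpow (by norm_num) (abs_nonneg _)
        _ ≤ 2 ^ p * (A n x + Cf x) := by nlinarith [hAnn n x, hCnn x]
    · calc B n x ≤ (2 * |f n x|) ^ p := by
            apply Real.rpow_le_rpow (abs_nonneg _) _ hp0.le
            calc |f n x - flim x| ≤ |f n x| + |flim x| := abs_sub _ _
              _ ≤ 2 * |f n x| := by linarith
        _ = 2 ^ p * A n x := Real.mul_rpow (by norm_num) (abs_nonneg _)
        _ ≤ 2 ^ p * (A n x + Cf x) := by nlinarith [hAnn n x, hCnn x]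
  have hBint : ∀ n, Integrable (B n) μ := by
    intro n
    refine Integrable.mono' (((hAint n).add hCint).const_mul (2 ^ p))
      (hBmeas n).aestronglyMeasurable (Eventually.of_forall fun x => ?_)
    rw [Real.norm_eq_abs, abs_of_nonneg (hBnn n x)]
    exact hBptle n x
  -- integral bounds
  have hMA : ∀ n, ∫ x, A n x ∂μ ≤ M.toReal := by
    intro n
    rw [integral_eq_lintegral_of_nonneg_ae (Eventually.of_forall (hAnn n))
      (hAmeas n).aestronglyMeasurable]
    exact ENNReal.toReal_mono hMtop (hM n)
  have hMC : ∫ x, Cf x ∂μ ≤ M.toReal := by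
    rw [integral_eq_lintegral_of_nonneg_ae (Eventually.of_forall hCnn)
      hCmeas.aestronglyMeasurable]
    exact ENNReal.toReal_mono hMtop hMf
  set K : ℝ := 2 ^ p * (M.toReal + M.toReal) with hK
  have h2p : (0:ℝ) ≤ 2 ^ p := Real.rpow_nonneg (by norm_num) _
  have hK0 : 0 ≤ K := by
    have : (0:ℝ) ≤ M.toReal := ENNReal.toReal_nonneg
    nlinarith
  have hBK : ∀ n, ∫ x, B n x ∂μ ≤ K := by
    intro n
    calc ∫ x, B n x ∂μ ≤ ∫ x, 2 ^ p * (A n x + Cf x) ∂μ :=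
          integral_mono (hBint n) (((hAint n).add hCint).const_mul _) (hBptle n)
      _ = 2 ^ p * (∫ x, A n x ∂μ + ∫ x, Cf x ∂μ) := by
          rw [integral_const_mul, integral_add (hAint n) hCint]
      _ ≤ K := by
          have h1 := hMA n
          have h2 := hMC
          have h3 : (0:ℝ) ≤ ∫ x, A n x ∂μ := integral_nonneg (hAnn n)
          nlinarith
  set g : ℕ → Ω → ℝ := fun n x => |A n x - B n x - Cf x| with hg
  have hgint : ∀ n, Integrable (g n) μ := fun n => (((hAint n).sub (hBint n)).sub hCint).abs
  -- main convergence : ∫ g n → 0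
  have hg0 : Tendsto (fun n => ∫ x, g n x ∂μ) atTop (nhds 0) := by
    rw [NormedAddCommGroup.tendsto_nhds_zero]
    intro ε hε
    set ε' : ℝ := ε / (2 * (K + 1)) with hε'def
    have hε' : 0 < ε' := by positivity
    obtain ⟨C, hC0, hkey⟩ := BL.key hp0 hε'
    set h : ℕ → Ω → ℝ := fun n x => max (g n x - ε' * B n x) 0 with hh
    have hgle : ∀ n x, g n x ≤ h n x + ε' * B n x := fun n x => by
      have := le_max_left (g n x - ε' * B n x) 0
      simp only [hh]; linarith
    have hptw : ∀ n x, h n x ≤ (C + 1) * Cf x := by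
      intro n x
      apply max_le _ (by nlinarith [hCnn x])
      have hk := hkey (f n x - flim x) (flim x)
      rw [sub_add_cancel] at hk
      have h1 : g n x ≤ |A n x - B n x| + Cf x := by
        calc g n x ≤ |A n x - B n x| + |Cf x| := abs_sub _ _
          _ = |A n x - B n x| + Cf x := by rw [abs_of_nonneg (hCnn x)]
      have h2 : |A n x - B n x| ≤ ε' * B n x + C * Cf x := hk
      linarith
    have htend : ∀ᵐ x ∂μ, Tendsto (fun n => h n x) atTop (nhds 0) := by
      filter_upwards [hae] with x hx
      have hA' : Tendsto (fun n => A n x) atTop (nhds (Cf x)) := (hcont.tendsto _).comp hx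
      have hB' : Tendsto (fun n => B n x) atTop (nhds 0) := by
        have h1 : Tendsto (fun n => f n x - flim x) atTop (nhds 0) := by
          simpa using hx.sub_const (flim x)
        have h2 := (hcont.tendsto 0).comp h1
        simpa [Function.comp_def, Real.zero_rpow hp0.ne'] using h2
      have hg' : Tendsto (fun n => g n x) atTop (nhds 0) := by
        have h3 : Tendsto (fun n => A n x - B n x - Cf x) atTop
            (nhds (Cf x - 0 - Cf x)) := (hA'.sub hB').sub tendsto_const_nhds
        have h4 := (continuous_abs.tendsto _).comp h3
        simpa [Function.comp_def] using h4
      have h5 : Tendsto (fun n => max (g n x - ε' * B n x) 0) atTop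
          (nhds (max (0 - ε' * 0) 0)) :=
        (hg'.sub (hB'.const_mul ε')).max tendsto_const_nhds
      simpa using h5
    have hhint : ∀ n, Integrable (h n) μ := fun n =>
      ((hgint n).sub ((hBint n).const_mul ε')).sup (integrable_zero _ _ _)
    have hDCT : Tendsto (fun n => ∫ x, h n x ∂μ) atTop (nhds 0) := by
      have hres := tendsto_integral_of_dominated_convergence (μ := μ)
        (F := fun n x => h n x) (f := fun _ => (0:ℝ)) (fun x => (C + 1) * Cf x)
        (fun n => (hhint n).aestronglyMeasurable) (hCint.const_mul _)
        (fun n => Eventually.of_forall fun x => by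
          rw [Real.norm_eq_abs, abs_of_nonneg (le_max_right _ _)]
          exact hptw n x)
        htend
      simpa using hres
    have hev : ∀ᶠ n in atTop, ∫ x, h n x ∂μ < ε / 2 :=
      hDCT.eventually_lt_const (by positivity)
    filter_upwards [hev] with n hn
    rw [Real.norm_eq_abs, abs_of_nonneg (integral_nonneg fun x => abs_nonneg _)]
    have hεK : ε' * (K + 1) = ε / 2 := by
      rw [hε'def]; field_simp
    calc ∫ x, g n x ∂μ ≤ ∫ x, (h n x + ε' * B n x) ∂μ :=
          integral_mono (hgint n) ((hhint n).add ((hBint n).const_mul ε'))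
            (fun x => hgle n x)
      _ = ∫ x, h n x ∂μ + ε' * ∫ x, B n x ∂μ := by
          rw [integral_add (hhint n) ((hBint n).const_mul ε'), integral_const_mul]
      _ < ε / 2 + ε' * (K + 1) := by
          have := mul_le_mul_of_nonneg_left (hBK n) hε'.le
          have h6 : ε' * K < ε' * (K + 1) := by nlinarith
          linarith
      _ = ε := by rw [hεK]; ring
  -- final assembly
  have habs : ∀ n, |(∫ x, A n x ∂μ) - (∫ x, B n x ∂μ) - ∫ x, Cf x ∂μ| ≤ ∫ x, g n x ∂μ := by
    intro n
    have hsub : (∫ x, A n x ∂μ) - (∫ x, B n x ∂μ) - ∫ x, Cf x ∂μ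
        = ∫ x, (A n x - B n x - Cf x) ∂μ := by
      have h1 : Integrable (fun x => A n x - B n x) μ := (hAint n).sub (hBint n)
      rw [integral_sub h1 hCint, integral_sub (hAint n) (hBint n)]
    rw [hsub, ← Real.norm_eq_abs]
    calc ‖∫ x, (A n x - B n x - Cf x) ∂μ‖ ≤ ∫ x, ‖A n x - B n x - Cf x‖ ∂μ :=
          norm_integral_le_integral_norm _
      _ = ∫ x, g n x ∂μ := by simp [hg, Real.norm_eq_abs]
  have hL : Tendsto (fun n => (∫ x, A n x ∂μ) - ∫ x, B n x ∂μ) atTop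
      (nhds (∫ x, Cf x ∂μ)) := by
    rw [tendsto_iff_norm_sub_tendsto_zero]
    apply squeeze_zero (fun n => norm_nonneg _) (fun n => ?_) hg0
    rw [Real.norm_eq_abs]
    exact habs n
  have hfin := (continuous_abs.tendsto _).comp hL
  rw [abs_of_nonneg (integral_nonneg fun x => hCnn x)] at hfin
  exact hfin
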